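/- Let μ be a probability measure on ℝ^d, let s ≠ 0 and σ > 0 be reals, and let w : ℝ^d → [0,∞) be a bounded measurable function with ∫ w dμ > 0. Define g_w(x) = ∫ w(x₀) · exp(−‖x − s·x₀‖²/(2 s² σ²)) dμ(x₀) and m_w(x) = (∫ x₀ · w(x₀) · exp(−‖x − s·x₀‖²/(2 s² σ²)) dμ(x₀)) / g_w(x). Then g_w(x) > 0 for every x ∈ ℝ^d, g_w is differentiable, and ∇ log g_w(x) = (s·m_w(x) − x)/(s² σ²) for all x. (Conditional Tweedie's formula: the score of the y-conditional noisy marginal, with likelihood weight w(x₀) = p(y|x₀), equals (s·E[x₀|x_t, y] − x_t)/(s²σ²).) -/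

import Mathlib

open MeasureTheory

set_option maxHeartbeats 1000000
set_option synthInstance.maxHeartbeats 1000000

private lemma tw_aux_texp (A t : ℝ) (hA : 0 < A) (ht : 0 ≤ t) :
    t * Real.exp (-t ^ 2 / A) ≤ 1 + A := by
  rcases le_or_gt t 1 with h | h
  · have : Real.exp (-t ^ 2 / A) ≤ 1 := Real.exp_le_one_iff.mpr (by
      apply div_nonpos_of_nonpos_of_nonneg <;> nlinarith [sq_nonneg t])
    nlinarith [Real.exp_pos (-t ^ 2 / A)]
  · have h1 : t ^ 2 / A ≤ Real.exp (t ^ 2 / A) := (Real.add_one_le_exp _).trans' (by nlinarith)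
    have h2 : Real.exp (-t ^ 2 / A) ≤ A / t ^ 2 := by
      rw [neg_div, Real.exp_neg]
      rw [inv_le_comm₀ (Real.exp_pos _) (by positivity)]
      calc (A / t ^ 2)⁻¹ = t ^ 2 / A := by rw [inv_div]
        _ ≤ Real.exp (t ^ 2 / A) := h1
    calc t * Real.exp (-t ^ 2 / A) ≤ t * (A / t ^ 2) := by nlinarith [Real.exp_pos (-t ^ 2 / A)]
      _ = A / t := by field_simp
      _ ≤ A := by rw [div_le_iff₀ (by linarith)]; nlinarith
      _ ≤ 1 + A := by linarith

private lemma tw_aux_deriv {d : ℕ} (s A : ℝ) (wa : ℝ) (a y : EuclideanSpace ℝ (Fin d)) :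
    HasFDerivAt (fun x : EuclideanSpace ℝ (Fin d) => wa * Real.exp (-‖x - s • a‖ ^ 2 / A))
      (((-2 / A) * (wa * Real.exp (-‖y - s • a‖ ^ 2 / A))) • (innerSL ℝ (y - s • a))) y := by
  have h1 : HasFDerivAt (fun x : EuclideanSpace ℝ (Fin d) => x - s • a)
      (ContinuousLinearMap.id ℝ (EuclideanSpace ℝ (Fin d))) y := (hasFDerivAt_id y).sub_const _
  have h2 : HasFDerivAt (fun x : EuclideanSpace ℝ (Fin d) => ‖x - s • a‖ ^ 2)
      (2 • innerSL ℝ (y - s • a)) y := by simpa using h1.norm_sq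
  have h3 := h2.const_mul (-A⁻¹)
  rw [show (fun x : EuclideanSpace ℝ (Fin d) => -A⁻¹ * ‖x - s • a‖ ^ 2)
      = (fun x : EuclideanSpace ℝ (Fin d) => -‖x - s • a‖ ^ 2 / A) from
    funext fun x => by ring] at h3
  have h4 := (Real.hasDerivAt_exp (-‖y - s • a‖ ^ 2 / A)).comp_hasFDerivAt y h3
  have h5 := h4.const_mul wa
  refine h5.congr_fderiv ?_
  match_scalars
  field_simp

/-- **Conditional Tweedie's formula.** With a bounded measurable likelihood weight
`w ≥ 0` with `∫ w dμ > 0`, the weighted Gaussian-smoothed density `g_w` is positive and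
differentiable, and `∇ log g_w (x) = (s • m_w x - x) / (s² σ²)`. -/
theorem conditional_tweedie_formula {d : ℕ} (μ : Measure (EuclideanSpace ℝ (Fin d)))
    [IsProbabilityMeasure μ] (s σ : ℝ) (hs : s ≠ 0) (hσ : 0 < σ)
    (w : EuclideanSpace ℝ (Fin d) → ℝ) (hw_meas : Measurable w)
    (hw_nonneg : ∀ x, 0 ≤ w x) (hw_bdd : ∃ C, ∀ x, w x ≤ C)
    (hw_pos : 0 < ∫ x₀, w x₀ ∂μ)
    (gw : EuclideanSpace ℝ (Fin d) → ℝ)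
    (hgw : ∀ x, gw x = ∫ x₀, w x₀ * Real.exp (-‖x - s • x₀‖ ^ 2 / (2 * s ^ 2 * σ ^ 2)) ∂μ)
    (mw : EuclideanSpace ℝ (Fin d) → EuclideanSpace ℝ (Fin d))
    (hmw : ∀ x, mw x = (gw x)⁻¹ •
      ∫ x₀, (w x₀ * Real.exp (-‖x - s • x₀‖ ^ 2 / (2 * s ^ 2 * σ ^ 2))) • x₀ ∂μ) :
    (∀ x, 0 < gw x) ∧ Differentiable ℝ gw ∧
      ∀ x, gradient (fun y => Real.log (gw y)) x = (s ^ 2 * σ ^ 2)⁻¹ • (s • mw x - x) := by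
  obtain ⟨C, hC⟩ := hw_bdd
  have hC0 : 0 ≤ C := (hw_nonneg 0).trans (hC 0)
  set A : ℝ := 2 * s ^ 2 * σ ^ 2 with hAdef
  have hs2 : (0:ℝ) < s ^ 2 := by rw [← sq_abs]; exact pow_pos (abs_pos.mpr hs) 2
  have hA : 0 < A := by
    have := mul_pos (mul_pos (by norm_num : (0:ℝ) < 2) hs2) (pow_pos hσ 2)
    simpa [hAdef] using this
  have cont_exp : ∀ x : EuclideanSpace ℝ (Fin d),
      Continuous fun a : EuclideanSpace ℝ (Fin d) => Real.exp (-‖x - s • a‖ ^ 2 / A) := by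
    intro x; fun_prop
  have exp_le_one : ∀ x a : EuclideanSpace ℝ (Fin d), Real.exp (-‖x - s • a‖ ^ 2 / A) ≤ 1 := by
    intro x a
    exact Real.exp_le_one_iff.mpr
      (div_nonpos_of_nonpos_of_nonneg (neg_nonpos.mpr (by positivity)) hA.le)
  have int_scalar : ∀ x : EuclideanSpace ℝ (Fin d),
      Integrable (fun a => w a * Real.exp (-‖x - s • a‖ ^ 2 / A)) μ := by
    intro x
    refine Integrable.mono' (integrable_const C)
      ((hw_meas.mul (cont_exp x).measurable).aestronglyMeasurable) ?_
    filter_upwards with a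
    rw [Real.norm_eq_abs, abs_of_nonneg (mul_nonneg (hw_nonneg a) (Real.exp_pos _).le)]
    calc w a * Real.exp (-‖x - s • a‖ ^ 2 / A) ≤ C * 1 :=
          mul_le_mul (hC a) (exp_le_one x a) (Real.exp_pos _).le hC0
      _ = C := mul_one C
  -- positivity of gw
  have hpos : ∀ x : EuclideanSpace ℝ (Fin d), 0 < gw x := by
    intro x
    rw [hgw x]
    rw [integral_pos_iff_support_of_nonneg
      (fun a => mul_nonneg (hw_nonneg a) (Real.exp_pos _).le) (int_scalar x)]
    have hsupp : (Function.support fun a : EuclideanSpace ℝ (Fin d) =>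
        w a * Real.exp (-‖x - s • a‖ ^ 2 / A)) = Function.support w := by
      ext a
      simp [Function.mem_support, mul_ne_zero_iff, Real.exp_ne_zero]
    rw [hsupp]
    have hw_int : Integrable w μ := by
      refine Integrable.mono' (integrable_const C) hw_meas.aestronglyMeasurable ?_
      filter_upwards with a
      rw [Real.norm_eq_abs, abs_of_nonneg (hw_nonneg a)]
      exact hC a
    exact (integral_pos_iff_support_of_nonneg hw_nonneg hw_int).mp hw_pos
  -- elementary norm bound
  have hna : ∀ x a : EuclideanSpace ℝ (Fin d), ‖a‖ ≤ |s|⁻¹ * (‖x - s • a‖ + ‖x‖) := by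
    intro x a
    have hsa : ‖s • a‖ = |s| * ‖a‖ := by rw [norm_smul, Real.norm_eq_abs]
    have h2 : ‖s • a‖ ≤ ‖x - s • a‖ + ‖x‖ := by
      calc ‖s • a‖ = ‖x - (x - s • a)‖ := by congr 1; abel
        _ ≤ ‖x‖ + ‖x - s • a‖ := norm_sub_le _ _
        _ = ‖x - s • a‖ + ‖x‖ := add_comm _ _
    have habs : (0:ℝ) < |s| := abs_pos.mpr hs
    rw [hsa] at h2
    rw [inv_mul_eq_div, le_div_iff₀ habs]
    nlinarith
  have int_vec : ∀ x : EuclideanSpace ℝ (Fin d),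
      Integrable (fun a => (w a * Real.exp (-‖x - s • a‖ ^ 2 / A)) • a) μ := by
    intro x
    refine Integrable.mono' (integrable_const (C * |s|⁻¹ * (1 + A + ‖x‖)))
      (((hw_meas.mul (cont_exp x).measurable).aestronglyMeasurable).smul
        aestronglyMeasurable_id) ?_
    filter_upwards with a
    rw [norm_smul, Real.norm_eq_abs, abs_of_nonneg (mul_nonneg (hw_nonneg a) (Real.exp_pos _).le)]
    have h1 : Real.exp (-‖x - s • a‖ ^ 2 / A) * ‖x - s • a‖ ≤ 1 + A := by
      rw [mul_comm]; exact tw_aux_texp A _ hA (norm_nonneg _)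
    have h2 := exp_le_one x a
    have h3 := (Real.exp_pos (-‖x - s • a‖ ^ 2 / A)).le
    have h4 := hna x a
    have h6 := hC a
    have h7 : (0:ℝ) ≤ |s|⁻¹ := by positivity
    have h8 : (0:ℝ) ≤ ‖x‖ := norm_nonneg _
    have h9 : (0:ℝ) ≤ ‖a‖ := norm_nonneg _
    have step1 : w a * Real.exp (-‖x - s • a‖ ^ 2 / A) * ‖a‖
        ≤ C * Real.exp (-‖x - s • a‖ ^ 2 / A) * (|s|⁻¹ * (‖x - s • a‖ + ‖x‖)) :=
      mul_le_mul (mul_le_mul_of_nonneg_right h6 h3) h4 h9 (mul_nonneg hC0 h3)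
    have step2 : Real.exp (-‖x - s • a‖ ^ 2 / A) * ‖x - s • a‖
        + Real.exp (-‖x - s • a‖ ^ 2 / A) * ‖x‖ ≤ 1 + A + ‖x‖ := by
      have := mul_le_mul_of_nonneg_right h2 h8
      linarith
    calc w a * Real.exp (-‖x - s • a‖ ^ 2 / A) * ‖a‖
        ≤ C * Real.exp (-‖x - s • a‖ ^ 2 / A) * (|s|⁻¹ * (‖x - s • a‖ + ‖x‖)) := step1
      _ = C * |s|⁻¹ * (Real.exp (-‖x - s • a‖ ^ 2 / A) * ‖x - s • a‖
            + Real.exp (-‖x - s • a‖ ^ 2 / A) * ‖x‖) := by ring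
      _ ≤ C * |s|⁻¹ * (1 + A + ‖x‖) := mul_le_mul_of_nonneg_left step2 (mul_nonneg hC0 h7)
  -- uniform bound for the derivative
  have hF'bound : ∀ (y a : EuclideanSpace ℝ (Fin d)),
      ‖((-2 / A) * (w a * Real.exp (-‖y - s • a‖ ^ 2 / A))) • (innerSL ℝ (y - s • a))‖
        ≤ 2 / A * (C * (1 + A)) := by
    intro y a
    have hns := norm_smul (α := ℝ) (β := EuclideanSpace ℝ (Fin d) →L[ℝ] ℝ)
      ((-2 / A) * (w a * Real.exp (-‖y - s • a‖ ^ 2 / A))) (innerSL ℝ (y - s • a))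
    rw [hns, innerSL_apply_norm, Real.norm_eq_abs]
    have h1 : Real.exp (-‖y - s • a‖ ^ 2 / A) * ‖y - s • a‖ ≤ 1 + A := by
      rw [mul_comm]; exact tw_aux_texp A _ hA (norm_nonneg _)
    have h3 := (Real.exp_pos (-‖y - s • a‖ ^ 2 / A)).le
    have h5 := hw_nonneg a
    have h6 := hC a
    have habs : |(-2 / A) * (w a * Real.exp (-‖y - s • a‖ ^ 2 / A))|
        = 2 / A * (w a * Real.exp (-‖y - s • a‖ ^ 2 / A)) := by
      rw [abs_mul, abs_of_nonneg (mul_nonneg h5 h3), abs_div, abs_neg, abs_of_pos hA]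
      norm_num
    rw [habs]
    have hAinv : (0:ℝ) ≤ 2 / A := by positivity
    have h9 : (0:ℝ) ≤ ‖y - s • a‖ := norm_nonneg _
    have hstep : w a * Real.exp (-‖y - s • a‖ ^ 2 / A) * ‖y - s • a‖ ≤ C * (1 + A) := by
      calc w a * Real.exp (-‖y - s • a‖ ^ 2 / A) * ‖y - s • a‖
          = w a * (Real.exp (-‖y - s • a‖ ^ 2 / A) * ‖y - s • a‖) := by ring
        _ ≤ C * (1 + A) := mul_le_mul h6 h1 (mul_nonneg h3 h9) hC0
    calc 2 / A * (w a * Real.exp (-‖y - s • a‖ ^ 2 / A)) * ‖y - s • a‖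
        = 2 / A * (w a * Real.exp (-‖y - s • a‖ ^ 2 / A) * ‖y - s • a‖) := by ring
      _ ≤ 2 / A * (C * (1 + A)) := mul_le_mul_of_nonneg_left hstep hAinv
  have meas_F' : ∀ x : EuclideanSpace ℝ (Fin d), AEStronglyMeasurable
      (fun a => ((-2 / A) * (w a * Real.exp (-‖x - s • a‖ ^ 2 / A))) • (innerSL ℝ (x - s • a)))
      μ := by
    intro x
    refine AEStronglyMeasurable.smul (𝕜 := ℝ)
      (f := fun a => (-2 / A) * (w a * Real.exp (-‖x - s • a‖ ^ 2 / A)))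
      (g := fun a => innerSL ℝ (x - s • a)) ?_ ?_
    · exact ((hw_meas.mul (cont_exp x).measurable).const_mul _).aestronglyMeasurable
    · exact (Continuous.aestronglyMeasurable (by fun_prop))
  have int_F' : ∀ x : EuclideanSpace ℝ (Fin d), Integrable
      (fun a => ((-2 / A) * (w a * Real.exp (-‖x - s • a‖ ^ 2 / A))) • (innerSL ℝ (x - s • a)))
      μ := by
    intro x
    refine Integrable.mono' (integrable_const (2 / A * (C * (1 + A)))) (meas_F' x) ?_
    filter_upwards with a using hF'bound x a
  -- differentiation under the integral sign
  have key : ∀ x : EuclideanSpace ℝ (Fin d),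
      HasFDerivAt (fun y : EuclideanSpace ℝ (Fin d) =>
          ∫ a, w a * Real.exp (-‖y - s • a‖ ^ 2 / A) ∂μ)
        (∫ a, ((-2 / A) * (w a * Real.exp (-‖x - s • a‖ ^ 2 / A))) •
          (innerSL ℝ (x - s • a)) ∂μ) x := by
    intro x
    apply hasFDerivAt_integral_of_dominated_of_fderiv_le (𝕜 := ℝ)
      (F := fun (y : EuclideanSpace ℝ (Fin d)) a => w a * Real.exp (-‖y - s • a‖ ^ 2 / A))
      (F' := fun (y : EuclideanSpace ℝ (Fin d)) a =>
        ((-2 / A) * (w a * Real.exp (-‖y - s • a‖ ^ 2 / A))) • (innerSL ℝ (y - s • a)))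
      (bound := fun _ => 2 / A * (C * (1 + A))) (s := Metric.ball x 1) (Metric.ball_mem_nhds x one_pos)
    · filter_upwards with y
      exact (hw_meas.mul (cont_exp y).measurable).aestronglyMeasurable
    · exact int_scalar x
    · exact meas_F' x
    · filter_upwards with a
      intro y hy
      exact hF'bound y a
    · exact integrable_const _
    · filter_upwards with a
      intro y hy
      exact tw_aux_deriv s A (w a) a y
  have hgw_fun : gw = fun y : EuclideanSpace ℝ (Fin d) =>
      ∫ a, w a * Real.exp (-‖y - s • a‖ ^ 2 / A) ∂μ := funext hgw
  have keyg : ∀ x : EuclideanSpace ℝ (Fin d), HasFDerivAt gw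
      (∫ a, ((-2 / A) * (w a * Real.exp (-‖x - s • a‖ ^ 2 / A))) •
        (innerSL ℝ (x - s • a)) ∂μ) x := by
    intro x; rw [hgw_fun]; exact key x
  have hdiff : Differentiable ℝ gw := fun x => (keyg x).differentiableAt
  refine ⟨hpos, hdiff, ?_⟩
  intro x
  -- the vector-valued candidate gradient
  set G : EuclideanSpace ℝ (Fin d) :=
    ∫ a, ((-2 / A) * (w a * Real.exp (-‖x - s • a‖ ^ 2 / A))) • (x - s • a) ∂μ with hGdef
  have int_vecx : Integrable
      (fun a => (w a * Real.exp (-‖x - s • a‖ ^ 2 / A)) • (x - s • a)) μ := by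
    have h1 : Integrable (fun a => (w a * Real.exp (-‖x - s • a‖ ^ 2 / A)) • x) μ :=
      (int_scalar x).smul_const x
    have h2 : Integrable
        (fun a => s • ((w a * Real.exp (-‖x - s • a‖ ^ 2 / A)) • a)) μ :=
      (int_vec x).smul s
    refine (h1.sub h2).congr ?_
    filter_upwards with a
    simp only [Pi.sub_apply]
    rw [smul_sub]
    congr 1
    rw [smul_comm]
  have int_vec2 : Integrable
      (fun a => ((-2 / A) * (w a * Real.exp (-‖x - s • a‖ ^ 2 / A))) • (x - s • a)) μ := by
    refine (int_vecx.smul (-2 / A)).congr ?_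
    filter_upwards with a
    simp only [Pi.smul_apply]
    rw [smul_smul]
  -- identify the Fréchet derivative with the gradient via the inner product
  have htoDual : (InnerProductSpace.toDual ℝ (EuclideanSpace ℝ (Fin d))) G
      = ∫ a, ((-2 / A) * (w a * Real.exp (-‖x - s • a‖ ^ 2 / A))) •
          (innerSL ℝ (x - s • a)) ∂μ := by
    apply ContinuousLinearMap.ext
    intro v
    rw [ContinuousLinearMap.integral_apply (int_F' x)]
    rw [InnerProductSpace.toDual_apply_apply, hGdef]
    rw [real_inner_comm, ← integral_inner int_vec2 v]
    congr 1
    funext a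
    rw [ContinuousLinearMap.smul_apply, innerSL_apply_apply, real_inner_smul_right,
      real_inner_comm]
    simp [smul_eq_mul]
  have hGrad : HasGradientAt gw G x := by
    rw [hasGradientAt_iff_hasFDerivAt, htoDual]
    exact keyg x
  have hlog : HasGradientAt (fun y => Real.log (gw y)) ((gw x)⁻¹ • G) x := by
    have h := (Real.hasDerivAt_log (hpos x).ne').comp_hasFDerivAt x hGrad.hasFDerivAt
    rw [hasGradientAt_iff_hasFDerivAt]
    have hmap : (InnerProductSpace.toDual ℝ (EuclideanSpace ℝ (Fin d))) ((gw x)⁻¹ • G)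
        = (gw x)⁻¹ • (InnerProductSpace.toDual ℝ (EuclideanSpace ℝ (Fin d))) G := by
      rw [map_smulₛₗ]
      simp
    rw [hmap]
    exact h
  have hgrad_eq := hlog.gradient
  rw [hgrad_eq]
  -- compute G
  have hJ : (∫ a, (w a * Real.exp (-‖x - s • a‖ ^ 2 / A)) • (x - s • a) ∂μ)
      = (gw x) • x - s • (∫ a, (w a * Real.exp (-‖x - s • a‖ ^ 2 / A)) • a ∂μ) := by
    have h1 : Integrable (fun a => (w a * Real.exp (-‖x - s • a‖ ^ 2 / A)) • x) μ :=
      (int_scalar x).smul_const x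
    have h2 : Integrable
        (fun a => s • ((w a * Real.exp (-‖x - s • a‖ ^ 2 / A)) • a)) μ := (int_vec x).smul s
    calc (∫ a, (w a * Real.exp (-‖x - s • a‖ ^ 2 / A)) • (x - s • a) ∂μ)
        = ∫ a, ((w a * Real.exp (-‖x - s • a‖ ^ 2 / A)) • x
            - s • ((w a * Real.exp (-‖x - s • a‖ ^ 2 / A)) • a)) ∂μ := by
          congr 1
          funext a
          rw [smul_sub]
          congr 1
          rw [smul_comm]
      _ = (∫ a, (w a * Real.exp (-‖x - s • a‖ ^ 2 / A)) • x ∂μ)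
            - ∫ a, s • ((w a * Real.exp (-‖x - s • a‖ ^ 2 / A)) • a) ∂μ := integral_sub h1 h2
      _ = (gw x) • x - s • (∫ a, (w a * Real.exp (-‖x - s • a‖ ^ 2 / A)) • a ∂μ) := by
          rw [integral_smul_const, integral_smul, hgw x]
  have hGval : G = (-2 / A) •
      ((gw x) • x - s • (∫ a, (w a * Real.exp (-‖x - s • a‖ ^ 2 / A)) • a ∂μ)) := by
    rw [hGdef, ← hJ, ← integral_smul]
    congr 1
    funext a
    rw [smul_smul]
  rw [hGval, hmw x]
  have hg := (hpos x).ne'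
  rw [smul_comm ((gw x)⁻¹) ((-2 : ℝ) / A), smul_sub, inv_smul_smul₀ hg,
    smul_comm ((gw x)⁻¹) s]
  have hcoef : (-2 : ℝ) / A = -(s ^ 2 * σ ^ 2)⁻¹ := by
    rw [hAdef]
    field_simp
  rw [hcoef, neg_smul, smul_sub, smul_sub, neg_sub]
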